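/- arXiv:1205.3667 — 2 statements merged into one kernel-verified Lean document; each statement's English description precedes it below -/
import Mathlib

section
/- Let V = (Z/rZ)^{2g} with g ≥ 2, equipped with the standard symplectic (alternating, nondegenerate) bilinear form e defined by e(a_i, b_j) = δ_{ij}, e(a_i, a_j) = e(b_i, b_j) = 0 for a symplectic basis {a_1, b_1, ..., a_g, b_g}. If f : V × V → Z/rZ is a bilinear alternating form such that e(x, y) = 0 implies f(x, y) = 0 for all x, y ∈ V, then f is a scalar multiple of e (i.e., f = c·e for some c ∈ Z/rZ). -/
/-- Standard basis vector `a_i` in `(ℤ/rℤ)^{2g}`, indexed by `Fin g ⊕ Fin g`. -/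
def aVec (r g : ℕ) (i : Fin g) : (Fin g ⊕ Fin g) → ZMod r := Pi.single (Sum.inl i) 1

/-- Standard basis vector `b_i`. -/
def bVec (r g : ℕ) (i : Fin g) : (Fin g ⊕ Fin g) → ZMod r := Pi.single (Sum.inr i) 1

/-- The standard symplectic form `e` on `(ℤ/rℤ)^{2g}`:
`e(a_i, b_j) = δ_{ij}`, `e(a_i, a_j) = e(b_i, b_j) = 0`. -/
def sympForm (r g : ℕ) (x y : (Fin g ⊕ Fin g) → ZMod r) : ZMod r :=
  ∑ i : Fin g, (x (Sum.inl i) * y (Sum.inr i) - x (Sum.inr i) * y (Sum.inl i))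

/-- If a bilinear alternating form `f` on `(ℤ/rℤ)^{2g}` (g ≥ 2) vanishes on every
pair on which the standard symplectic form `e` vanishes, then `f` is a scalar
multiple of `e`. -/
theorem stmt0 (r g : ℕ) (hr : 2 ≤ r) (hg : 2 ≤ g)
    (f : ((Fin g ⊕ Fin g) → ZMod r) → ((Fin g ⊕ Fin g) → ZMod r) → ZMod r)
    (hadd₁ : ∀ x x' y, f (x + x') y = f x y + f x' y)
    (hadd₂ : ∀ x y y', f x (y + y') = f x y + f x y')
    (halt : ∀ x, f x x = 0)
    (hvanish : ∀ x y, sympForm r g x y = 0 → f x y = 0) :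
    ∃ c : ZMod r, ∀ x y, f x y = c * sympForm r g x y := by
  haveI : NeZero r := ⟨by omega⟩
  classical
  set E : (Fin g ⊕ Fin g) → ((Fin g ⊕ Fin g) → ZMod r) := fun s => Pi.single s 1 with hE
  have h0₁ : ∀ y, f 0 y = 0 := by
    intro y
    have h := hadd₁ 0 0 y
    rw [add_zero] at h
    exact left_eq_add.mp h
  have h0₂ : ∀ x, f x 0 = 0 := by
    intro x
    have h := hadd₂ x 0 0
    rw [add_zero] at h
    exact left_eq_add.mp h
  have hn₁ : ∀ (n : ℕ) x y, f (n • x) y = n • f x y := by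
    intro n x y
    induction n with
    | zero => simpa using h0₁ y
    | succ k ih => rw [succ_nsmul, hadd₁, ih, succ_nsmul]
  have hn₂ : ∀ (n : ℕ) x y, f x (n • y) = n • f x y := by
    intro n x y
    induction n with
    | zero => simpa using h0₂ x
    | succ k ih => rw [succ_nsmul, hadd₂, ih, succ_nsmul]
  have hs₁ : ∀ (c : ZMod r) x y, f (c • x) y = c * f x y := by
    intro c x y
    obtain ⟨n, rfl⟩ : ∃ n : ℕ, (n : ZMod r) = c := ⟨c.val, ZMod.natCast_rightInverse c⟩
    rw [Nat.cast_smul_eq_nsmul, hn₁, nsmul_eq_mul]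
  have hs₂ : ∀ (c : ZMod r) x y, f x (c • y) = c * f x y := by
    intro c x y
    obtain ⟨n, rfl⟩ : ∃ n : ℕ, (n : ZMod r) = c := ⟨c.val, ZMod.natCast_rightInverse c⟩
    rw [Nat.cast_smul_eq_nsmul, hn₂, nsmul_eq_mul]
  have hneg₂ : ∀ x y, f x (-y) = - f x y := by
    intro x y
    rw [← neg_one_smul (ZMod r) y, hs₂]
    ring
  have hanti : ∀ x y, f y x = - f x y := by
    intro x y
    have h := halt (x + y)
    rw [hadd₁, hadd₂, hadd₂, halt, halt] at h
    linear_combination h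
  have fsum₁ : ∀ (S : Finset (Fin g ⊕ Fin g)) (u : (Fin g ⊕ Fin g) → ((Fin g ⊕ Fin g) → ZMod r)) y,
      f (∑ s ∈ S, u s) y = ∑ s ∈ S, f (u s) y := by
    intro S u y
    induction S using Finset.induction_on with
    | empty => simpa using h0₁ y
    | insert _ _ hns ih => rw [Finset.sum_insert hns, hadd₁, ih, Finset.sum_insert hns]
  have fsum₂ : ∀ x (S : Finset (Fin g ⊕ Fin g)) (u : (Fin g ⊕ Fin g) → ((Fin g ⊕ Fin g) → ZMod r)),
      f x (∑ s ∈ S, u s) = ∑ s ∈ S, f x (u s) := by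
    intro x S u
    induction S using Finset.induction_on with
    | empty => simpa using h0₂ x
    | insert _ _ hns ih => rw [Finset.sum_insert hns, hadd₂, ih, Finset.sum_insert hns]
  have hexp : ∀ x y, f x y = ∑ s, ∑ t, x s * y t * f (E s) (E t) := by
    intro x y
    have hx : x = ∑ s, x s • E s := by
      conv_lhs => rw [← Finset.univ_sum_single x]
      refine Finset.sum_congr rfl fun s _ => ?_
      ext t
      by_cases h : t = s <;> simp [hE, Pi.single_apply, h]
    have hy : y = ∑ t, y t • E t := by
      conv_lhs => rw [← Finset.univ_sum_single y]
      refine Finset.sum_congr rfl fun s _ => ?_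
      ext t
      by_cases h : t = s <;> simp [hE, Pi.single_apply, h]
    conv_lhs => rw [hx, hy]
    rw [fsum₁]
    refine Finset.sum_congr rfl fun s _ => ?_
    rw [hs₁, fsum₂, Finset.mul_sum]
    refine Finset.sum_congr rfl fun t _ => ?_
    rw [hs₂]
    ring
  -- sympForm bilinearity pieces
  have eadd₁ : ∀ x x' y, sympForm r g (x + x') y = sympForm r g x y + sympForm r g x' y := by
    intro x x' y
    simp only [sympForm, Pi.add_apply, ← Finset.sum_add_distrib]
    exact Finset.sum_congr rfl fun k _ => by ring
  have esub₂ : ∀ x y y', sympForm r g x (y - y') = sympForm r g x y - sympForm r g x y' := by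
    intro x y y'
    simp only [sympForm, Pi.sub_apply, ← Finset.sum_sub_distrib]
    exact Finset.sum_congr rfl fun k _ => by ring
  -- values on basis pairs
  have eLL : ∀ i j : Fin g, sympForm r g (E (Sum.inl i)) (E (Sum.inl j)) = 0 := by
    intro i j
    simp [sympForm, hE, Pi.single_apply]
  have eRR : ∀ i j : Fin g, sympForm r g (E (Sum.inr i)) (E (Sum.inr j)) = 0 := by
    intro i j
    simp [sympForm, hE, Pi.single_apply]
  have eLR : ∀ i j : Fin g, sympForm r g (E (Sum.inl i)) (E (Sum.inr j)) = if i = j then 1 else 0 := by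
    intro i j
    simp [sympForm, hE, Pi.single_apply, Finset.sum_ite_eq, eq_comm]
  have eRL : ∀ i j : Fin g, sympForm r g (E (Sum.inr i)) (E (Sum.inl j)) = if i = j then -1 else 0 := by
    intro i j
    by_cases h : i = j <;>
      simp [sympForm, hE, Pi.single_apply, Finset.sum_ite_eq, eq_comm, h]
  have hfLL : ∀ i j, f (E (Sum.inl i)) (E (Sum.inl j)) = 0 := fun i j => hvanish _ _ (eLL i j)
  have hfRR : ∀ i j, f (E (Sum.inr i)) (E (Sum.inr j)) = 0 := fun i j => hvanish _ _ (eRR i j)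
  have hfLR : ∀ i j, i ≠ j → f (E (Sum.inl i)) (E (Sum.inr j)) = 0 := by
    intro i j h
    exact hvanish _ _ (by rw [eLR, if_neg h])
  have hfRL : ∀ i j, i ≠ j → f (E (Sum.inr i)) (E (Sum.inl j)) = 0 := by
    intro i j h
    exact hvanish _ _ (by rw [eRL, if_neg h])
  set i0 : Fin g := ⟨0, by omega⟩ with hi0
  set c : ZMod r := f (E (Sum.inl i0)) (E (Sum.inr i0)) with hc
  have hsame : ∀ i, f (E (Sum.inl i)) (E (Sum.inr i)) = c := by
    intro i
    by_cases h : i = i0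
    · rw [h]
    · have h' : i0 ≠ i := Ne.symm h
      have key := hvanish (E (Sum.inl i0) + E (Sum.inl i)) (E (Sum.inr i0) - E (Sum.inr i)) ?_
      · rw [hadd₁, sub_eq_add_neg, hadd₂, hadd₂, hneg₂, hneg₂, hfLR i0 i h', hfLR i i0 h] at key
        linear_combination -key
      · rw [eadd₁, esub₂, esub₂, eLR, eLR, eLR, eLR]
        simp [h, h']
  have hB : ∀ s t, f (E s) (E t) = c * sympForm r g (E s) (E t) := by
    rintro (i | i) (j | j)
    · rw [hfLL, eLL]; ring
    · by_cases h : i = j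
      · subst h
        rw [hsame, eLR, if_pos rfl]; ring
      · rw [hfLR i j h, eLR, if_neg h]; ring
    · by_cases h : i = j
      · subst h
        rw [hanti, hsame, eRL, if_pos rfl]; ring
      · rw [hfRL i j h, eRL, if_neg h]; ring
    · rw [hfRR, eRR]; ring
  have hsymp : ∀ x y, sympForm r g x y = ∑ s, ∑ t, x s * y t * sympForm r g (E s) (E t) := by
    intro x y
    simp only [Fintype.sum_sum_type, eLL, eLR, eRL, eRR, mul_zero, mul_ite, mul_one, mul_neg,
      Finset.sum_const_zero, Finset.sum_ite_eq, Finset.mem_univ, if_true, add_zero, zero_add]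
    rw [sympForm, Finset.sum_sub_distrib, Finset.sum_neg_distrib, ← sub_eq_add_neg]
  refine ⟨c, fun x y => ?_⟩
  rw [hexp, hsymp, Finset.mul_sum]
  refine Finset.sum_congr rfl fun s _ => ?_
  rw [Finset.mul_sum]
  refine Finset.sum_congr rfl fun t _ => ?_
  rw [hB]
  ring
end

section
/- Let V = (Z/rZ)^{2g} with g ≥ 2 and standard symplectic form e. Let G' ⊆ Alt(V) be the set of alternating bilinear forms f such that f(σ, τ) = 0 for every pair (σ, τ) of order-r, linearly independent elements with e(σ, τ) = 0. Then every f ∈ G' is a scalar multiple of e. (Strengthening of the basic lemma: it suffices to test only pairs of primitive, linearly independent isotropic vectors.) -/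
namespace Stmt17Aux

variable {r g : ℕ}

lemma zero_left {F : ((Fin g ⊕ Fin g) → ZMod r) → ((Fin g ⊕ Fin g) → ZMod r) → ZMod r}
    (h1 : ∀ x x' y, F (x + x') y = F x y + F x' y) (y : (Fin g ⊕ Fin g) → ZMod r) :
    F 0 y = 0 := by
  have h := h1 0 0 y
  rw [add_zero] at h
  exact left_eq_add.mp h

lemma zero_right {F : ((Fin g ⊕ Fin g) → ZMod r) → ((Fin g ⊕ Fin g) → ZMod r) → ZMod r}
    (h2 : ∀ x y y', F x (y + y') = F x y + F x y') (x : (Fin g ⊕ Fin g) → ZMod r) :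
    F x 0 = 0 := by
  have h := h2 x 0 0
  rw [add_zero] at h
  exact left_eq_add.mp h

lemma smul_left [NeZero r]
    {F : ((Fin g ⊕ Fin g) → ZMod r) → ((Fin g ⊕ Fin g) → ZMod r) → ZMod r}
    (h1 : ∀ x x' y, F (x + x') y = F x y + F x' y)
    (m : ZMod r) (x y : (Fin g ⊕ Fin g) → ZMod r) :
    F (m • x) y = m * F x y := by
  have hn : ∀ n : ℕ, F (n • x) y = n • F x y := by
    intro n
    induction n with
    | zero => simpa using zero_left h1 y
    | succ n ih => rw [succ_nsmul, succ_nsmul, h1, ih]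
  have hm : ((m.val : ℕ) : ZMod r) = m := ZMod.natCast_rightInverse m
  rw [← hm, Nat.cast_smul_eq_nsmul, hn, nsmul_eq_mul, hm]

lemma smul_right [NeZero r]
    {F : ((Fin g ⊕ Fin g) → ZMod r) → ((Fin g ⊕ Fin g) → ZMod r) → ZMod r}
    (h2 : ∀ x y y', F x (y + y') = F x y + F x y')
    (m : ZMod r) (x y : (Fin g ⊕ Fin g) → ZMod r) :
    F x (m • y) = m * F x y := by
  have hn : ∀ n : ℕ, F x (n • y) = n • F x y := by
    intro n
    induction n with
    | zero => simpa using zero_right h2 x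
    | succ n ih => rw [succ_nsmul, succ_nsmul, h2, ih]
  have hm : ((m.val : ℕ) : ZMod r) = m := ZMod.natCast_rightInverse m
  rw [← hm, Nat.cast_smul_eq_nsmul, hn, nsmul_eq_mul, hm]

lemma sum_left {F : ((Fin g ⊕ Fin g) → ZMod r) → ((Fin g ⊕ Fin g) → ZMod r) → ZMod r}
    (h1 : ∀ x x' y, F (x + x') y = F x y + F x' y) {ι : Type*} (s : Finset ι)
    (xf : ι → ((Fin g ⊕ Fin g) → ZMod r)) (y : (Fin g ⊕ Fin g) → ZMod r) :
    F (∑ i ∈ s, xf i) y = ∑ i ∈ s, F (xf i) y := by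
  induction s using Finset.cons_induction with
  | empty => simpa using zero_left h1 y
  | cons a s ha ih => rw [Finset.sum_cons, Finset.sum_cons, h1, ih]

lemma sum_right {F : ((Fin g ⊕ Fin g) → ZMod r) → ((Fin g ⊕ Fin g) → ZMod r) → ZMod r}
    (h2 : ∀ x y y', F x (y + y') = F x y + F x y') {ι : Type*} (s : Finset ι)
    (x : (Fin g ⊕ Fin g) → ZMod r) (yf : ι → ((Fin g ⊕ Fin g) → ZMod r)) :
    F x (∑ i ∈ s, yf i) = ∑ i ∈ s, F x (yf i) := by
  induction s using Finset.cons_induction with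
  | empty => simpa using zero_right h2 x
  | cons a s ha ih => rw [Finset.sum_cons, Finset.sum_cons, h2, ih]

lemma expand [NeZero r]
    {F : ((Fin g ⊕ Fin g) → ZMod r) → ((Fin g ⊕ Fin g) → ZMod r) → ZMod r}
    (h1 : ∀ x x' y, F (x + x') y = F x y + F x' y)
    (h2 : ∀ x y y', F x (y + y') = F x y + F x y')
    (x y : (Fin g ⊕ Fin g) → ZMod r) :
    F x y = ∑ u : Fin g ⊕ Fin g, ∑ v : Fin g ⊕ Fin g,
      x u * y v * F (Pi.single u 1) (Pi.single v 1) := by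
  have hx : ∀ z : (Fin g ⊕ Fin g) → ZMod r,
      z = ∑ u : Fin g ⊕ Fin g, z u • (Pi.single u 1 : (Fin g ⊕ Fin g) → ZMod r) := by
    intro z
    funext w
    simp [Finset.sum_apply, Pi.single_apply]
  conv_lhs => rw [hx x, hx y]
  rw [sum_left h1]
  refine Finset.sum_congr rfl fun u _ => ?_
  rw [sum_right h2]
  refine Finset.sum_congr rfl fun v _ => ?_
  rw [smul_left h1, smul_right h2]
  ring

lemma sadd₁ (x x' y : (Fin g ⊕ Fin g) → ZMod r) :
    sympForm r g (x + x') y = sympForm r g x y + sympForm r g x' y := by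
  simp only [sympForm, Pi.add_apply, ← Finset.sum_add_distrib]
  exact Finset.sum_congr rfl fun i _ => by ring

lemma sadd₂ (x y y' : (Fin g ⊕ Fin g) → ZMod r) :
    sympForm r g x (y + y') = sympForm r g x y + sympForm r g x y' := by
  simp only [sympForm, Pi.add_apply, ← Finset.sum_add_distrib]
  exact Finset.sum_congr rfl fun i _ => by ring

lemma sneg₂ (x y : (Fin g ⊕ Fin g) → ZMod r) :
    sympForm r g x (-y) = - sympForm r g x y := by
  simp only [sympForm, Pi.neg_apply, ← Finset.sum_neg_distrib]
  exact Finset.sum_congr rfl fun i _ => by ring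

lemma sAA (i j : Fin g) :
    sympForm r g (Pi.single (Sum.inl i) 1) (Pi.single (Sum.inl j) 1) = 0 := by
  simp [sympForm, Pi.single_apply]

lemma sBB (i j : Fin g) :
    sympForm r g (Pi.single (Sum.inr i) 1) (Pi.single (Sum.inr j) 1) = 0 := by
  simp [sympForm, Pi.single_apply]

lemma sAB (i j : Fin g) :
    sympForm r g (Pi.single (Sum.inl i) 1) (Pi.single (Sum.inr j) 1) =
      if i = j then 1 else 0 := by
  simp [sympForm, Pi.single_apply, eq_comm]

lemma sBA (i j : Fin g) :
    sympForm r g (Pi.single (Sum.inr i) 1) (Pi.single (Sum.inl j) 1) =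
      if i = j then -1 else 0 := by
  simp [sympForm, Pi.single_apply, eq_comm]
  split <;> simp

end Stmt17Aux

open Stmt17Aux in
/-- Strengthening of the basic lemma: if an alternating bilinear form `f` on
`V = (ℤ/rℤ)^{2g}` (g ≥ 2) satisfies `f(σ,τ) = 0` for every pair `(σ,τ)` of
linearly independent elements of order `r` (i.e. generating a submodule
isomorphic to `(ℤ/rℤ)²`) with `e(σ,τ) = 0`, then `f` is a scalar multiple of
the standard symplectic form `e`. -/
theorem stmt17 (r g : ℕ) (hr : 2 ≤ r) (hg : 2 ≤ g)
    (f : ((Fin g ⊕ Fin g) → ZMod r) → ((Fin g ⊕ Fin g) → ZMod r) → ZMod r)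
    (hadd₁ : ∀ x x' y, f (x + x') y = f x y + f x' y)
    (hadd₂ : ∀ x y y', f x (y + y') = f x y + f x y')
    (halt : ∀ x, f x x = 0)
    (hvanish : ∀ σ τ : (Fin g ⊕ Fin g) → ZMod r,
      (∀ m n : ZMod r, m • σ + n • τ = 0 → m = 0 ∧ n = 0) →
      sympForm r g σ τ = 0 → f σ τ = 0) :
    ∃ c : ZMod r, ∀ x y, f x y = c * sympForm r g x y := by
  haveI : NeZero r := ⟨by omega⟩
  classical
  -- skew symmetry
  have hskew : ∀ x y, f y x = - f x y := by
    intro x y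
    have h := halt (x + y)
    rw [hadd₁, hadd₂, hadd₂, halt, halt] at h
    linear_combination h
  have fneg₂ : ∀ x y, f x (-y) = - f x y := by
    intro x y
    have h := hadd₂ x y (-y)
    rw [add_neg_cancel] at h
    have h0 : f x 0 = 0 := zero_right hadd₂ x
    linear_combination h0 - h
  -- independence of distinct single pairs
  have hind : ∀ u v : Fin g ⊕ Fin g, u ≠ v →
      ∀ m n : ZMod r,
        m • (Pi.single u 1 : (Fin g ⊕ Fin g) → ZMod r)
          + n • (Pi.single v 1 : (Fin g ⊕ Fin g) → ZMod r) = 0 →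
        m = 0 ∧ n = 0 := by
    intro u v huv m n h
    constructor
    · have h' := congrFun h u
      simpa [Pi.single_apply, huv] using h'
    · have h' := congrFun h v
      simpa [Pi.single_apply, Ne.symm huv] using h'
  have fAAne : ∀ i j : Fin g, i ≠ j →
      f (Pi.single (Sum.inl i) 1) (Pi.single (Sum.inl j) 1) = 0 := by
    intro i j hij
    exact hvanish _ _ (hind _ _ (by simp [hij])) (sAA i j)
  have fBBne : ∀ i j : Fin g, i ≠ j →
      f (Pi.single (Sum.inr i) 1) (Pi.single (Sum.inr j) 1) = 0 := by
    intro i j hij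
    exact hvanish _ _ (hind _ _ (by simp [hij])) (sBB i j)
  have fABne : ∀ i j : Fin g, i ≠ j →
      f (Pi.single (Sum.inl i) 1) (Pi.single (Sum.inr j) 1) = 0 := by
    intro i j hij
    refine hvanish _ _ (hind _ _ (by simp)) ?_
    rw [sAB, if_neg hij]
  -- all diagonal values agree
  have cEq : ∀ i j : Fin g,
      f (Pi.single (Sum.inl i) 1) (Pi.single (Sum.inr i) 1) =
      f (Pi.single (Sum.inl j) 1) (Pi.single (Sum.inr j) 1) := by
    intro i j
    rcases eq_or_ne i j with rfl | hij
    · rfl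
    · have hindστ : ∀ m n : ZMod r,
          m • ((Pi.single (Sum.inl i) 1 : (Fin g ⊕ Fin g) → ZMod r)
              + Pi.single (Sum.inl j) 1)
          + n • ((Pi.single (Sum.inr i) 1 : (Fin g ⊕ Fin g) → ZMod r)
              - Pi.single (Sum.inr j) 1) = 0 → m = 0 ∧ n = 0 := by
        intro m n h
        constructor
        · have h' := congrFun h (Sum.inl i)
          simpa [Pi.single_apply, hij] using h'
        · have h' := congrFun h (Sum.inr i)
          simpa [Pi.single_apply, hij] using h'
      have heστ : sympForm r g
          ((Pi.single (Sum.inl i) 1 : (Fin g ⊕ Fin g) → ZMod r)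
            + Pi.single (Sum.inl j) 1)
          ((Pi.single (Sum.inr i) 1 : (Fin g ⊕ Fin g) → ZMod r)
            - Pi.single (Sum.inr j) 1) = 0 := by
        rw [sub_eq_add_neg, sadd₁, sadd₂, sadd₂, sneg₂, sneg₂, sAB, sAB, sAB, sAB,
          if_pos rfl, if_pos rfl, if_neg hij, if_neg (Ne.symm hij)]
        ring
      have h0 := hvanish _ _ hindστ heστ
      rw [sub_eq_add_neg, hadd₁, hadd₂, hadd₂, fneg₂, fneg₂,
        fABne i j hij, fABne j i (Ne.symm hij)] at h0
      linear_combination h0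
  set c : ZMod r :=
    f (Pi.single (Sum.inl ⟨0, by omega⟩) 1) (Pi.single (Sum.inr ⟨0, by omega⟩) 1) with hc
  have key : ∀ u v : Fin g ⊕ Fin g,
      f (Pi.single u 1) (Pi.single v 1) =
        c * sympForm r g (Pi.single u 1) (Pi.single v 1) := by
    rintro (i | i) (j | j)
    · rw [sAA, mul_zero]
      rcases eq_or_ne i j with rfl | hij
      · exact halt _
      · exact fAAne i j hij
    · rw [sAB]
      rcases eq_or_ne i j with rfl | hij
      · rw [if_pos rfl, mul_one]
        exact cEq i _
      · rw [if_neg hij, mul_zero]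
        exact fABne i j hij
    · rw [sBA, hskew (Pi.single (Sum.inl j) 1) (Pi.single (Sum.inr i) 1)]
      rcases eq_or_ne i j with rfl | hij
      · rw [if_pos rfl]
        linear_combination - cEq i ⟨0, by omega⟩
      · rw [if_neg hij, fABne j i (Ne.symm hij), mul_zero, neg_zero]
    · rw [sBB, mul_zero]
      rcases eq_or_ne i j with rfl | hij
      · exact halt _
      · exact fBBne i j hij
  refine ⟨c, fun x y => ?_⟩
  rw [expand hadd₁ hadd₂ x y, expand (F := sympForm r g) sadd₁ sadd₂ x y, Finset.mul_sum]
  refine Finset.sum_congr rfl fun u _ => ?_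
  rw [Finset.mul_sum]
  refine Finset.sum_congr rfl fun v _ => ?_
  rw [key u v]
  ring
end
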